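/- Let (ξ_n)_{n≥0} be i.i.d. standard normal random variables and β > 0. If s > 2β e^{γ/2}, then (s/(√2 β))^n |ξ_0 ξ_1 ⋯ ξ_{n-1}| → +∞ almost surely as n → ∞. -/

import Mathlib

open MeasureTheory ProbabilityTheory Filter
open Real Set
open scoped ENNReal NNReal Topology

local notation "γ" => Real.eulerMascheroniConstant

lemma abs_log_le (x : ℝ) (hx : 0 < x) : |Real.log x| ≤ 4 * x ^ (-(1/4) : ℝ) + x := by
  rcases le_or_gt 1 x with h | h
  · rw [abs_of_nonneg (Real.log_nonneg h)]
    have := Real.log_le_sub_one_of_pos hx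
    nlinarith [Real.rpow_nonneg hx.le (-(1/4):ℝ)]
  · rw [abs_of_nonpos (Real.log_nonpos hx.le h.le)]
    have h1 : -Real.log x = Real.log x⁻¹ := (Real.log_inv x).symm
    have h2 : Real.log x⁻¹ = 4 * Real.log (x⁻¹ ^ ((1/4):ℝ)) := by
      rw [Real.log_rpow (by positivity)]; ring
    have h3 : Real.log (x⁻¹ ^ ((1/4):ℝ)) ≤ x⁻¹ ^ ((1/4):ℝ) - 1 :=
      Real.log_le_sub_one_of_pos (by positivity)
    have h4 : x⁻¹ ^ ((1/4):ℝ) = x ^ (-(1/4):ℝ) := by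
      rw [← Real.rpow_neg_one, ← Real.rpow_mul hx.le]
      norm_num
    rw [h1, h2, h4]
    rw [h4] at h3
    nlinarith [h3, hx.le]

lemma rpow_le_of_abs_le {x q : ℝ} (hx : 0 < x) (hq : |q| ≤ 1/2) :
    x ^ q ≤ x ^ (-(1/2) : ℝ) + x ^ ((1/2) : ℝ) := by
  rcases le_or_gt 1 x with h | h
  · have : x ^ q ≤ x ^ ((1/2):ℝ) := Real.rpow_le_rpow_of_exponent_le h (abs_le.mp hq).2
    have h0 : (0:ℝ) ≤ x ^ (-(1/2):ℝ) := Real.rpow_nonneg hx.le _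
    linarith
  · have : x ^ q ≤ x ^ (-(1/2):ℝ) := Real.rpow_le_rpow_of_exponent_ge hx h.le (abs_le.mp hq).1
    have h0 : (0:ℝ) ≤ x ^ ((1/2):ℝ) := Real.rpow_nonneg hx.le _
    linarith

noncomputable def Bnd (x : ℝ) : ℝ :=
  (x ^ (-(1/2) : ℝ) + x ^ ((1/2) : ℝ)) * (4 * x ^ (-(1/4) : ℝ) + x) * Real.exp (-(1/2) * x ^ 2)

lemma integrableOn_Bnd : IntegrableOn Bnd (Ioi (0:ℝ)) := by
  have h : ∀ r : ℝ, -1 < r → IntegrableOn (fun x : ℝ => x ^ r * Real.exp (-(1/2) * x ^ 2)) (Ioi 0) :=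
    fun r hr => integrableOn_rpow_mul_exp_neg_mul_sq (by norm_num) hr
  have h1 := ((((h (-(3/4)) (by norm_num)).const_mul 4).add (h (1/2) (by norm_num))).add
      ((h (1/4) (by norm_num)).const_mul 4)).add (h (3/2) (by norm_num))
  refine IntegrableOn.congr_fun h1 (fun x hx => ?_) measurableSet_Ioi
  have hx : (0:ℝ) < x := hx
  simp only [Bnd, Pi.add_apply]
  rw [show (-(3/4):ℝ) = -(1/2) + -(1/4) by norm_num, Real.rpow_add hx,
    show ((3/2):ℝ) = (1/2) + 1 by norm_num, Real.rpow_add hx, Real.rpow_one]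
  have e1 : x ^ ((1/2):ℝ) = x ^ (-(1/2):ℝ) * x := by
    have : x ^ (-(1/2):ℝ) * x ^ ((1:ℕ):ℝ) = x ^ ((1/2):ℝ) := by
      rw [← Real.rpow_add hx]; norm_num
    rw [← this, Real.rpow_natCast, pow_one]
  have e2 : x ^ ((1/4):ℝ) = x ^ ((1/2):ℝ) * x ^ (-(1/4):ℝ) := by
    rw [← Real.rpow_add hx]; norm_num
  rw [e2, e1]
  ring

lemma integrable_logint :
    IntegrableOn (fun x : ℝ => Real.log x * Real.exp (-(1/2) * x ^ 2)) (Ioi (0:ℝ)) ∧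
    ∫ x in Ioi (0:ℝ), Real.log x * Real.exp (-(1/2) * x ^ 2)
      = -(Real.sqrt (2 * Real.pi) / 4) * (γ + Real.log 2) := by
  set μ := (volume : Measure ℝ).restrict (Ioi (0:ℝ))
  set F : ℝ → ℝ → ℝ := fun q x => x ^ q * Real.exp (-(1/2) * x ^ 2) with hF
  set F' : ℝ → ℝ → ℝ := fun q x => (x ^ q * Real.log x) * Real.exp (-(1/2) * x ^ 2) with hF'
  have hmeasF : ∀ q, AEStronglyMeasurable (F q) μ := by
    intro q
    exact ((measurable_id.pow_const q).mul
      ((measurable_id.pow_const 2).const_mul (-(1/2))).exp).aestronglyMeasurable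
  have key := hasDerivAt_integral_of_dominated_loc_of_deriv_le (μ := μ)
    (F := F) (F' := F') (x₀ := 0) (bound := Bnd) (s := Metric.ball 0 (1/2)) (Metric.ball_mem_nhds _ (by norm_num))
    (Filter.Eventually.of_forall hmeasF)
    (by -- Integrable (F 0) μ
      have := integrableOn_rpow_mul_exp_neg_mul_sq (b := (1/2:ℝ)) (by norm_num)
        (s := 0) (by norm_num)
      exact this)
    (by -- AEStronglyMeasurable (F' 0) μ
      exact (((measurable_id.pow_const 0).mul Real.measurable_log).mul
        ((measurable_id.pow_const 2).const_mul (-(1/2))).exp).aestronglyMeasurable)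
    (by -- bound
      filter_upwards [ae_restrict_mem measurableSet_Ioi] with x hx q hq
      have hx : (0:ℝ) < x := hx
      have h1 : |x ^ q| = x ^ q := abs_of_nonneg (Real.rpow_nonneg hx.le q)
      have h2 : x ^ q ≤ x ^ (-(1/2):ℝ) + x ^ ((1/2):ℝ) :=
        rpow_le_of_abs_le hx (by
          rw [Metric.mem_ball, Real.dist_eq, sub_zero] at hq
          linarith [hq])
      have h3 : |Real.log x| ≤ 4 * x ^ (-(1/4):ℝ) + x := abs_log_le x hx
      have hB : 0 ≤ Real.exp (-(1/2) * x ^ 2) := (Real.exp_pos _).le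
      simp only [hF', Bnd, Real.norm_eq_abs, abs_mul, Real.abs_exp, h1]
      have := mul_le_mul h2 h3 (abs_nonneg _) (by positivity)
      exact mul_le_mul_of_nonneg_right this hB)
    integrableOn_Bnd
    (by -- HasDerivAt
      filter_upwards [ae_restrict_mem measurableSet_Ioi] with x hx q _
      have hx : (0:ℝ) < x := hx
      exact ((Real.hasStrictDerivAt_const_rpow hx q).hasDerivAt.mul_const _))
  obtain ⟨hint, hderiv⟩ := key
  -- identify ∫ F with Gamma formula on Ioi (-1)
  set g : ℝ → ℝ := fun q =>
    (1/2 : ℝ) ^ (-(q+1)/2) * (1/2) * Real.Gamma ((q+1)/2) with hg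
  have hfg : (fun q => ∫ x, F q x ∂μ) =ᶠ[nhds 0] g := by
    filter_upwards [Ioi_mem_nhds (show (-1:ℝ) < 0 by norm_num)] with q hq
    have := integral_rpow_mul_exp_neg_mul_rpow (p := 2) (q := q) (b := 1/2)
      (by norm_num) hq (by norm_num)
    show (∫ x, F q x ∂μ) = (1/2 : ℝ) ^ (-(q+1)/2) * (1/2) * Real.Gamma ((q+1)/2)
    rw [← this]
    refine setIntegral_congr_fun measurableSet_Ioi (fun x hx => ?_)
    have hx : (0:ℝ) < x := hx
    have : x ^ (2:ℝ) = x ^ (2:ℕ) := by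
      rw [show ((2:ℝ)) = ((2:ℕ):ℝ) by norm_num, Real.rpow_natCast]
    simp only [hF, this]
  -- derivative of g at 0
  have hu : HasDerivAt (fun q : ℝ => (q+1)/2) (1/2) 0 :=
    ((hasDerivAt_id 0).add_const 1).div_const 2
  have hGamma : HasDerivAt (fun q : ℝ => Real.Gamma ((q+1)/2))
      (-Real.sqrt Real.pi * (γ + 2 * Real.log 2) * (1/2)) 0 := by
    have h := Real.hasDerivAt_Gamma_one_half
    have : ((0:ℝ)+1)/2 = 1/2 := by norm_num
    exact HasDerivAt.comp 0 (this ▸ h) hu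
  have hpow : HasDerivAt (fun q : ℝ => (1/2:ℝ) ^ (-(q+1)/2))
      (Real.sqrt 2 * Real.log 2 / 2) 0 := by
    have hin : HasDerivAt (fun q : ℝ => -(q+1)/2) (-(1/2)) 0 := by
      have h := (((hasDerivAt_id (0:ℝ)).add_const 1).div_const 2).neg
      simpa only [neg_div, Pi.neg_def, id] using h
    have h := ((Real.hasStrictDerivAt_const_rpow (show (0:ℝ) < 1/2 by norm_num)
      (-(0+1)/2)).hasDerivAt).comp 0 hin
    have e1 : ((1:ℝ)/2) ^ (-((0:ℝ)+1)/2) = Real.sqrt 2 := by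
      rw [show (-((0:ℝ)+1)/2) = -((1:ℝ)/2) by norm_num,
        Real.rpow_neg (by norm_num), ← Real.sqrt_eq_rpow, one_div,
        Real.sqrt_inv, inv_inv]
    have e2 : Real.log (1/2) = -Real.log 2 := by
      rw [Real.log_div one_ne_zero two_ne_zero, Real.log_one, zero_sub]
    convert h using 1
    · rfl
    · rfl
    · rfl
    rw [e1, e2]
    ring
  -- assemble derivative of g
  have hgd : HasDerivAt g
      ((Real.sqrt 2 * Real.log 2 / 2 * (1/2)) * Real.Gamma (((0:ℝ)+1)/2)
        + ((1/2:ℝ) ^ (-((0:ℝ)+1)/2) * (1/2))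
          * (-Real.sqrt Real.pi * (γ + 2 * Real.log 2) * (1/2))) 0 :=
    (hpow.mul_const (1/2)).mul hGamma
  have hval : (Real.sqrt 2 * Real.log 2 / 2 * (1/2)) * Real.Gamma (((0:ℝ)+1)/2)
        + ((1/2:ℝ) ^ (-((0:ℝ)+1)/2) * (1/2))
          * (-Real.sqrt Real.pi * (γ + 2 * Real.log 2) * (1/2))
      = -(Real.sqrt (2 * Real.pi) / 4) * (γ + Real.log 2) := by
    have e1 : ((1:ℝ)/2) ^ (-((0:ℝ)+1)/2) = Real.sqrt 2 := by
      rw [show (-((0:ℝ)+1)/2) = -((1:ℝ)/2) by norm_num,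
        Real.rpow_neg (by norm_num), ← Real.sqrt_eq_rpow, one_div,
        Real.sqrt_inv, inv_inv]
    rw [e1, show (((0:ℝ)+1)/2) = 1/2 by norm_num, Real.Gamma_one_half_eq,
      Real.sqrt_mul (by norm_num : (0:ℝ) ≤ 2)]
    ring
  rw [hval] at hgd
  have hf0 : HasDerivAt (fun q => ∫ x, F q x ∂μ)
      (-(Real.sqrt (2 * Real.pi) / 4) * (γ + Real.log 2)) 0 :=
    hgd.congr_of_eventuallyEq hfg
  have huniq := hderiv.unique hf0
  constructor
  · refine hint.congr (Filter.Eventually.of_forall (fun x => ?_))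
    simp [hF', Real.rpow_zero]
  · rw [← huniq]
    refine setIntegral_congr_fun measurableSet_Ioi (fun x hx => ?_)
    simp [hF', Real.rpow_zero]

lemma integrable_comp_abs' {f : ℝ → ℝ} (hf : IntegrableOn f (Ioi (0:ℝ))) :
    Integrable (fun x => f |x|) := by
  have eqI : IntegrableOn (fun x => f |x|) (Ioi (0:ℝ)) :=
    hf.congr_fun (fun x hx => by rw [abs_of_pos hx]) measurableSet_Ioi
  have int_Iic : IntegrableOn (fun x => f |x|) (Iic (0:ℝ)) := by
    rw [← Measure.map_neg_eq_self (volume : Measure ℝ)]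
    have m : MeasurableEmbedding fun x : ℝ => -x := (Homeomorph.neg ℝ).measurableEmbedding
    rw [m.integrableOn_map_iff]
    simp_rw [Function.comp_def, abs_neg, neg_preimage, neg_Iic, neg_zero]
    exact Iff.mpr integrableOn_Ici_iff_integrableOn_Ioi eqI
  have h := int_Iic.union eqI
  rwa [Iic_union_Ioi, integrableOn_univ] at h

lemma gaussian_log_abs :
    Integrable (fun x => Real.log |x|) (gaussianReal 0 1) ∧
    ∫ x, Real.log |x| ∂(gaussianReal 0 1) = -(γ + Real.log 2)/2 := by
  have hpdfnn : ∀ x, 0 ≤ gaussianPDFReal 0 1 x := gaussianPDFReal_nonneg 0 1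
  have hpdfmeas : Measurable fun x => (gaussianPDFReal 0 1 x).toNNReal :=
    (measurable_gaussianPDFReal 0 1).real_toNNReal
  have hmeq : gaussianReal 0 1 =
      (volume : Measure ℝ).withDensity (fun x => ((gaussianPDFReal 0 1 x).toNNReal : ℝ≥0∞)) := by
    rw [gaussianReal_of_var_ne_zero 0 one_ne_zero]
    rfl
  have hpdf : ∀ x : ℝ, gaussianPDFReal 0 1 x
      = (Real.sqrt (2 * Real.pi))⁻¹ * Real.exp (-(1/2) * x ^ 2) := by
    intro x
    rw [gaussianPDFReal]
    norm_num
    left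
    ring_nf
  have hH : Integrable (fun x : ℝ => Real.log |x| * Real.exp (-(1/2) * x ^ 2)) := by
    have := integrable_comp_abs' integrable_logint.1
    refine this.congr (Filter.Eventually.of_forall (fun x => ?_))
    simp only [sq_abs]
  have hint : Integrable (fun x : ℝ => gaussianPDFReal 0 1 x • Real.log |x|) := by
    refine (hH.const_mul ((Real.sqrt (2 * Real.pi))⁻¹)).congr
      (Filter.Eventually.of_forall (fun x => ?_))
    simp only [smul_eq_mul, hpdf x]
    ring
  constructor
  · rw [hmeq, integrable_withDensity_iff_integrable_smul hpdfmeas]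
    refine hint.congr (Filter.Eventually.of_forall (fun x => ?_))
    simp [NNReal.smul_def, Real.coe_toNNReal _ (hpdfnn x)]
  · rw [hmeq, integral_withDensity_eq_integral_smul hpdfmeas]
    have e0 : ∀ x : ℝ, ((gaussianPDFReal 0 1 x).toNNReal : ℝ≥0) • Real.log |x|
        = (Real.sqrt (2 * Real.pi))⁻¹ * (Real.log |x| * Real.exp (-(1/2) * x ^ 2)) := by
      intro x
      rw [NNReal.smul_def, smul_eq_mul, Real.coe_toNNReal _ (hpdfnn x), hpdf x]
      ring
    rw [integral_congr_ae (Filter.Eventually.of_forall e0), integral_const_mul]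
    have e1 : (fun x : ℝ => Real.log |x| * Real.exp (-(1/2) * x ^ 2))
        = fun x : ℝ => Real.log |x| * Real.exp (-(1/2) * |x| ^ 2) := by
      funext x; rw [sq_abs]
    rw [e1, integral_comp_abs (f := fun x => Real.log x * Real.exp (-(1/2) * x ^ 2)),
      integrable_logint.2]
    have hπ : (0:ℝ) < Real.sqrt (2 * Real.pi) :=
      Real.sqrt_pos.mpr (by positivity)
    field_simp
    ring

/-- If `(ξ_n)` are i.i.d. standard normal, `β > 0`, `s > 2β e^{γ/2}`, then
`(s/(√2β))^n |ξ_0 ⋯ ξ_{n-1}| → +∞` almost surely. -/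
theorem gaussian_product_tendsto_top
    {Ω : Type*} [MeasureSpace Ω] [IsProbabilityMeasure (ℙ : Measure Ω)]
    (β s : ℝ) (hβ : 0 < β)
    (ξ : ℕ → Ω → ℝ) (hmeas : ∀ n, Measurable (ξ n))
    (hindep : iIndepFun ξ ℙ)
    (hgauss : ∀ n, Measure.map (ξ n) ℙ = gaussianReal 0 1)
    (hs : 2 * β * Real.exp (Real.eulerMascheroniConstant / 2) < s) :
    ∀ᵐ ω ∂ℙ, Tendsto
      (fun n => (s / (Real.sqrt 2 * β)) ^ n * |∏ i ∈ Finset.range n, ξ i ω|)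
      atTop Filter.atTop := by
  have hspos : (0:ℝ) < s := lt_trans (by positivity) hs
  set r : ℝ := s / (Real.sqrt 2 * β) with hr
  have hrpos : 0 < r := by
    have : (0:ℝ) < Real.sqrt 2 := Real.sqrt_pos.mpr (by norm_num)
    positivity
  set c : ℝ := Real.log r with hc
  set μ0 : ℝ := -(γ + Real.log 2)/2 with hμ0
  have hcμ : 0 < c + μ0 := by
    have h2 : (0:ℝ) < Real.sqrt 2 := Real.sqrt_pos.mpr (by norm_num)
    have hlog : Real.log (2 * β * Real.exp (γ / 2)) < Real.log s :=
      Real.log_lt_log (by positivity) hs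
    rw [Real.log_mul (by positivity) (Real.exp_ne_zero _),
      Real.log_mul (by norm_num) hβ.ne', Real.log_exp] at hlog
    have hcval : c = Real.log s - (Real.log 2 / 2 + Real.log β) := by
      rw [hc, hr, Real.log_div hspos.ne' (by positivity),
        Real.log_mul h2.ne' hβ.ne', Real.log_sqrt (by norm_num)]
    rw [hcval, hμ0]
    linarith
  set Y : ℕ → Ω → ℝ := fun i ω => Real.log |ξ i ω| with hY
  have mlog : Measurable fun x : ℝ => Real.log |x| :=
    Real.measurable_log.comp measurable_abs
  have hYident : ∀ i, IdentDistrib (Y i) (Y 0) ℙ ℙ := by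
    intro i
    have : IdentDistrib (ξ i) (ξ 0) ℙ ℙ :=
      ⟨(hmeas i).aemeasurable, (hmeas 0).aemeasurable, by rw [hgauss i, hgauss 0]⟩
    exact this.comp mlog
  have hYindep : Pairwise (Function.onFun (IndepFun · · ℙ) Y) := by
    intro i j hij
    exact (hindep.indepFun hij).comp mlog mlog
  have hmap0 : Integrable (fun x : ℝ => Real.log |x|) (Measure.map (ξ 0) ℙ) := by
    rw [hgauss 0]; exact gaussian_log_abs.1
  have hYint : Integrable (Y 0) ℙ := by
    have := (integrable_map_measure mlog.aestronglyMeasurable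
      (hmeas 0).aemeasurable).mp hmap0
    exact this
  have hYmean : ∫ ω, Y 0 ω ∂ℙ = μ0 := by
    rw [hY]
    have := integral_map (μ := (ℙ : Measure Ω)) (φ := ξ 0) (hmeas 0).aemeasurable
      (f := fun x : ℝ => Real.log |x|) mlog.aestronglyMeasurable
    rw [← this, hgauss 0, gaussian_log_abs.2]
  have hslln := ProbabilityTheory.strong_law_ae Y hYint hYindep hYident
  rw [hYmean] at hslln
  have hne : ∀ᵐ ω ∂ℙ, ∀ i, ξ i ω ≠ 0 := by
    rw [ae_all_iff]
    intro i
    have hmap : ℙ (ξ i ⁻¹' {0}) = 0 := by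
      have h := Measure.map_apply (μ := (ℙ : Measure Ω)) (hmeas i) (measurableSet_singleton (0:ℝ))
      rw [hgauss i] at h
      rw [← h, gaussianReal_apply 0 one_ne_zero,
        setLIntegral_measure_zero _ _ (by simp)]
    rw [ae_iff]
    convert hmap using 2
    ext ω
    simp
  filter_upwards [hslln, hne] with ω hω hω0
  set S : ℕ → ℝ := fun n => ∑ i ∈ Finset.range n, Y i ω with hS
  have hid : ∀ n, r ^ n * |∏ i ∈ Finset.range n, ξ i ω|
      = Real.exp ((n:ℝ) * c + S n) := by
    intro n
    rw [Real.exp_add, Real.exp_nat_mul, hc, Real.exp_log hrpos, hS, Real.exp_sum]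
    congr 1
    rw [Finset.abs_prod]
    refine Finset.prod_congr rfl (fun i _ => ?_)
    rw [hY, Real.exp_log (abs_pos.mpr (hω0 i))]
  have h2 : Tendsto (fun n : ℕ => c + (n:ℝ)⁻¹ • S n) atTop (𝓝 (c + μ0)) :=
    tendsto_const_nhds.add hω
  have hev : ∀ᶠ n : ℕ in atTop, (c + μ0)/2 < c + (n:ℝ)⁻¹ • S n :=
    h2.eventually_const_lt (by linarith)
  have hbig : Tendsto (fun n : ℕ => (n:ℝ) * c + S n) atTop atTop := by
    refine tendsto_atTop_mono' atTop ?_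
      ((tendsto_natCast_atTop_atTop (R := ℝ)).atTop_mul_const (by linarith : (0:ℝ) < (c+μ0)/2))
    filter_upwards [hev, eventually_ge_atTop 1] with n hn hn1
    have hnpos : (0:ℝ) < n := by exact_mod_cast hn1
    have := (mul_le_mul_of_nonneg_left hn.le hnpos.le)
    calc (n:ℝ) * ((c+μ0)/2) ≤ (n:ℝ) * (c + (n:ℝ)⁻¹ • S n) := this
      _ = (n:ℝ) * c + S n := by
        rw [smul_eq_mul, mul_add, ← mul_assoc, mul_inv_cancel₀ hnpos.ne', one_mul]
  have := (Real.tendsto_exp_atTop).comp hbig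
  refine Tendsto.congr (fun n => ?_) this
  exact (hid n).symm
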